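/- arXiv:1302.2463 — 7 statements merged into one kernel-verified Lean document; each statement's English description precedes it below -/
import Mathlib

section
/- Let P = {x ∈ ℝⁿ : ⟨aᵢ,x⟩ + bᵢ ≥ 0, i = 1,…,m} with a₁,…,aₘ spanning ℝⁿ, and suppose P is nonempty and bounded. Then there exist positive reals α₁,…,αₘ with α₁a₁ + ⋯ + αₘaₘ = 0. -/
set_option maxHeartbeats 1000000


/-- If the polyhedron `P = {x : ⟨aᵢ,x⟩ + bᵢ ≥ 0}` (with `a₁,…,aₘ` spanning `ℝⁿ`)
is nonempty and bounded, then there is a vanishing positive linear combination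
of the normal vectors. -/
theorem stmt4 (m n : ℕ) (a : Fin m → (Fin n → ℝ)) (b : Fin m → ℝ)
    (hspan : Submodule.span ℝ (Set.range a) = ⊤)
    (hne : ({x : Fin n → ℝ | ∀ i, 0 ≤ (∑ j, a i j * x j) + b i}).Nonempty)
    (hbdd : Bornology.IsBounded {x : Fin n → ℝ | ∀ i, 0 ≤ (∑ j, a i j * x j) + b i}) :
    ∃ α : Fin m → ℝ, (∀ i, 0 < α i) ∧ ∑ i, α i • a i = 0 := by
  classical
  -- The recession cone of P is trivial.
  have hrec : ∀ y : Fin n → ℝ, (∀ i, 0 ≤ ∑ j, a i j * y j) → y = 0 := by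
    intro y hy
    by_contra hy0
    obtain ⟨x₀, hx₀⟩ := hne
    obtain ⟨R, hR⟩ := isBounded_iff_forall_norm_le.mp hbdd
    have hny : 0 < ‖y‖ := norm_pos_iff.mpr hy0
    set t : ℝ := (R + ‖x₀‖ + 1) / ‖y‖ with ht
    have hx₀R : ‖x₀‖ ≤ R := hR x₀ hx₀
    have ht0 : 0 < t := by
      apply div_pos _ hny
      have : 0 ≤ ‖x₀‖ := norm_nonneg _
      linarith
    have hmem : x₀ + t • y ∈ {x : Fin n → ℝ | ∀ i, 0 ≤ (∑ j, a i j * x j) + b i} := by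
      intro i
      have h1 : (∑ j, a i j * (x₀ + t • y) j)
          = (∑ j, a i j * x₀ j) + t * ∑ j, a i j * y j := by
        rw [Finset.mul_sum, ← Finset.sum_add_distrib]
        apply Finset.sum_congr rfl
        intro j _
        simp only [Pi.add_apply, Pi.smul_apply, smul_eq_mul]
        ring
      rw [h1]
      have := hx₀ i
      have h2 : 0 ≤ t * ∑ j, a i j * y j := mul_nonneg ht0.le (hy i)
      linarith
    have hle := hR _ hmem
    have h3 : ‖t • y‖ ≤ ‖x₀ + t • y‖ + ‖x₀‖ := by
      calc ‖t • y‖ = ‖(x₀ + t • y) - x₀‖ := by rw [add_sub_cancel_left]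
        _ ≤ ‖x₀ + t • y‖ + ‖x₀‖ := norm_sub_le _ _
    have h4 : ‖t • y‖ = t * ‖y‖ := by
      rw [norm_smul, Real.norm_eq_abs, abs_of_pos ht0]
    have h5 : t * ‖y‖ = R + ‖x₀‖ + 1 := by
      rw [ht, div_mul_cancel₀]
      exact hny.ne'
    rw [h4, h5] at h3
    linarith
  -- The image of the (truncated) simplex under β ↦ ∑ βᵢ • aᵢ.
  set Q : Set (Fin m → ℝ) := {β | (∀ i, 0 ≤ β i) ∧ ∑ i, β i ≤ 1} with hQdef
  set T : (Fin m → ℝ) →ₗ[ℝ] (Fin n → ℝ) :=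
    { toFun := fun β => ∑ i, β i • a i
      map_add' := by
        intro β γ
        simp [add_smul, Finset.sum_add_distrib]
      map_smul' := by
        intro c β
        simp [smul_smul, Finset.smul_sum] } with hTdef
  set K : Set (Fin n → ℝ) := T '' Q with hKdef
  have hQconv : Convex ℝ Q := by
    intro β hβ γ hγ p q hp hq hpq
    refine ⟨fun i => ?_, ?_⟩
    · have := hβ.1 i
      have := hγ.1 i
      simp only [Pi.add_apply, Pi.smul_apply, smul_eq_mul]
      nlinarith
    · have h1 : ∑ i, (p • β + q • γ) i = p * ∑ i, β i + q * ∑ i, γ i := by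
        simp [Finset.mul_sum, Finset.sum_add_distrib]
      rw [h1]
      have := hβ.2
      have := hγ.2
      nlinarith
  have hKconv : Convex ℝ K := hQconv.linear_image T
  -- each aᵢ and 0 lie in K
  have hzeroK : (0 : Fin n → ℝ) ∈ K := by
    refine ⟨0, ⟨fun i => le_refl 0, by simp⟩, by simp [hTdef]⟩
  have haK : ∀ i, a i ∈ K := by
    intro i
    refine ⟨Pi.single i 1, ⟨fun k => ?_, by simp⟩, ?_⟩
    · by_cases h : k = i <;> simp [h, Pi.single_apply]
    · simp only [hTdef, LinearMap.coe_mk, AddHom.coe_mk]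
      rw [Finset.sum_eq_single i]
      · simp
      · intro k _ hk
        simp [Pi.single_apply, hk]
      · simp
  -- affine span of K is everything
  have haff : affineSpan ℝ K = ⊤ := by
    rw [eq_top_iff]
    have h1 : affineSpan ℝ ({(0 : Fin n → ℝ)} ∪
        (fun v => v +ᵥ (0 : Fin n → ℝ)) '' Set.range a) = ⊤ := by
      apply affineSpan_singleton_union_vadd_eq_top_of_span_eq_top
      rwa [Subtype.range_coe]
    have h2 : ({(0 : Fin n → ℝ)} ∪
        (fun v => v +ᵥ (0 : Fin n → ℝ)) '' Set.range a) ⊆ K := by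
      rintro x (hx | ⟨v, ⟨i, rfl⟩, rfl⟩)
      · rw [Set.mem_singleton_iff] at hx; rw [hx]; exact hzeroK
      · simpa using haK i
    calc (⊤ : AffineSubspace ℝ (Fin n → ℝ)) = affineSpan ℝ _ := h1.symm
      _ ≤ affineSpan ℝ K := affineSpan_mono ℝ h2
  -- interior of K is nonempty
  have hint : (interior K).Nonempty := by
    rw [hKconv.interior_nonempty_iff_affineSpan_eq_top]
    exact haff
  -- 0 is in the interior of K
  have h0int : (0 : Fin n → ℝ) ∈ interior K := by
    by_contra h0
    obtain ⟨f, hf⟩ := geometric_hahn_banach_open_point (hKconv.interior) isOpen_interior h0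
    simp only [map_zero] at hf
    obtain ⟨z₀, hz₀⟩ := hint
    have hfz₀ : f z₀ < 0 := hf z₀ hz₀
    -- f is nonpositive on K
    have hfK : ∀ x ∈ K, f x ≤ 0 := by
      intro x hx
      by_contra hpos
      push_neg at hpos
      set c := f x with hc
      set d := f z₀ with hd
      have hcd : 0 < c - d := by linarith
      set s : ℝ := c / (2 * (c - d)) with hs
      have hs0 : 0 < s := by positivity
      have hs1 : s ≤ 1 := by
        rw [hs, div_le_one (by linarith)]
        nlinarith
      have hmem : (1 - s) • x + s • z₀ ∈ interior K :=
        hKconv.combo_self_interior_mem_interior hx hz₀ (by linarith) hs0 (by ring)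
      have := hf _ hmem
      have hval : f ((1 - s) • x + s • z₀) = (1 - s) * c + s * d := by
        simp [hc, hd, map_add, map_smul, smul_eq_mul]
      rw [hval] at this
      have hsc : s * (c - d) = c / 2 := by
        rw [hs]; field_simp
      nlinarith
    -- build a recession direction from f
    set e : Fin n → Fin n → ℝ := fun j k => if j = k then 1 else 0 with he
    set y : Fin n → ℝ := fun j => -f (e j) with hy
    have hyrec : ∀ i, 0 ≤ ∑ j, a i j * y j := by
      intro i
      have hfa : f (a i) = ∑ j, a i j * f (e j) := by
        conv_lhs => rw [pi_eq_sum_univ (a i)]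
        rw [map_sum]
        apply Finset.sum_congr rfl
        intro j _
        rw [map_smul, smul_eq_mul]
      have h1 : ∑ j, a i j * y j = -f (a i) := by
        rw [hfa, ← Finset.sum_neg_distrib]
        apply Finset.sum_congr rfl
        intro j _
        simp [hy]
      rw [h1]
      have := hfK (a i) (haK i)
      linarith
    have hy0 : y = 0 := hrec y hyrec
    -- then f = 0, contradicting f z₀ < 0
    have hfzero : ∀ x : Fin n → ℝ, f x = 0 := by
      intro x
      conv_lhs => rw [pi_eq_sum_univ x]
      rw [map_sum]
      apply Finset.sum_eq_zero
      intro j _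
      have : f (e j) = 0 := by
        have := congrFun hy0 j
        simp [hy] at this
        linarith [this]
      rw [map_smul, this, smul_eq_mul, mul_zero]
    rw [hfzero z₀] at hfz₀
    exact lt_irrefl 0 hfz₀
  -- extract a small ball around 0 inside K
  rw [mem_interior_iff_mem_nhds, Metric.mem_nhds_iff] at h0int
  obtain ⟨ε, hε, hball⟩ := h0int
  set v : Fin n → ℝ := ∑ i, a i with hv
  set t : ℝ := ε / (2 * (‖v‖ + 1)) with htdef
  have hvn : 0 ≤ ‖v‖ := norm_nonneg _
  have ht0 : 0 < t := by positivity
  have hmem : -t • v ∈ K := by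
    apply hball
    rw [Metric.mem_ball, dist_zero_right, norm_smul, Real.norm_eq_abs]
    have habs : |(-t)| = t := by rw [abs_neg, abs_of_pos ht0]
    rw [habs]
    have h1 : t * (‖v‖ + 1) = ε / 2 := by
      rw [htdef]; field_simp
    nlinarith
  obtain ⟨β, ⟨hβ0, _⟩, hβ⟩ := hmem
  refine ⟨fun i => β i + t, fun i => by have := hβ0 i; show 0 < β i + t; linarith, ?_⟩
  have h1 : ∑ i, (β i + t) • a i = (∑ i, β i • a i) + t • v := by
    rw [hv, Finset.smul_sum, ← Finset.sum_add_distrib]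
    apply Finset.sum_congr rfl
    intro i _
    rw [add_smul]
  have h2 : (∑ i, β i • a i) = -t • v := hβ
  rw [h1, h2]
  simp
end

section
/- Suppose δ ∈ ℝ^{m−n} lies in the cone generated by γ₁,…,γₘ ∈ ℝ^{m−n}, and suppose that whenever δ lies in the cone generated by a subset {γ_{i₁},…,γ_{i_k}}, one has k ≥ m−n. Then for every point z in Z = {z ∈ ℂᵐ : Σₖ γₖ|zₖ|² = δ}, the set of vectors {γₖ : zₖ ≠ 0} spans ℝ^{m−n}. -/
open Finset

/-- Conic Carathéodory: a nonnegative combination supported on `I` can be rewritten as a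
nonnegative combination supported on a subset `J ⊆ I` on which the vectors are
linearly independent. -/
lemma caratheodory_cone {m d : ℕ} (γ : Fin m → (Fin d → ℝ)) :
    ∀ I : Finset (Fin m), ∀ δ : Fin d → ℝ, ∀ μ : Fin m → ℝ,
      (∀ k ∈ I, 0 ≤ μ k) → ∑ k ∈ I, μ k • γ k = δ →
      ∃ J ⊆ I, LinearIndependent ℝ (fun k : J => γ k) ∧
        ∃ ν : Fin m → ℝ, (∀ k ∈ J, 0 ≤ ν k) ∧ ∑ k ∈ J, ν k • γ k = δ := by
  intro I
  induction I using Finset.strongInductionOn with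
  | _ I ih =>
  intro δ μ hμ hsum
  by_cases hind : LinearIndependent ℝ (fun k : I => γ k)
  · exact ⟨I, le_refl _, hind, μ, hμ, hsum⟩
  obtain ⟨g, hg0, i0, hi0⟩ := Fintype.not_linearIndependent_iff.mp hind
  classical
  -- extend g to Fin m, with a sign ensuring a positive entry at i0
  set s : ℝ := if 0 < g i0 then 1 else -1 with hs
  have hs0 : s ≠ 0 := by
    rw [hs]; split <;> norm_num
  set c : Fin m → ℝ := fun k => if h : k ∈ I then s * g ⟨k, h⟩ else 0 with hc
  have hci0 : 0 < c ↑i0 := by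
    have : c ↑i0 = s * g i0 := by simp [hc]
    rw [this, hs]
    rcases lt_or_ge 0 (g i0) with h | h
    · simpa [h] using h
    · have : g i0 < 0 := lt_of_le_of_ne h hi0
      simp only [if_neg (not_lt.mpr h)]
      nlinarith
  have hcsum : ∑ k ∈ I, c k • γ k = 0 := by
    have h1 : ∑ k ∈ I.attach, c ↑k • γ ↑k = ∑ k ∈ I, c k • γ k :=
      I.sum_attach (fun k => c k • γ k)
    have h2 : ∑ k ∈ I.attach, c ↑k • γ ↑k = s • ∑ i, g i • γ ↑i := by
      rw [Finset.smul_sum, ← Finset.univ_eq_attach]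
      refine Finset.sum_congr rfl fun k _ => ?_
      have : c ↑k = s * g k := by simp [hc]
      rw [this, mul_smul]
    rw [← h1, h2, hg0, smul_zero]
  -- pick the minimizer
  set T : Finset (Fin m) := I.filter (fun k => 0 < c k) with hT
  have hTne : T.Nonempty := ⟨i0, by simp [hT, hci0]⟩
  obtain ⟨k0, hk0T, hk0min⟩ := T.exists_min_image (fun k => μ k / c k) hTne
  have hk0I : k0 ∈ I := (Finset.mem_filter.mp hk0T).1
  have hck0 : 0 < c k0 := (Finset.mem_filter.mp hk0T).2
  set t : ℝ := μ k0 / c k0 with ht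
  have ht0 : 0 ≤ t := div_nonneg (hμ k0 hk0I) hck0.le
  set ν : Fin m → ℝ := fun k => μ k - t * c k with hν
  have hνk0 : ν k0 = 0 := by
    simp only [hν, ht]
    field_simp
    ring
  have hνnn : ∀ k ∈ I, 0 ≤ ν k := by
    intro k hk
    simp only [hν]
    rcases le_or_gt (c k) 0 with h | h
    · nlinarith [hμ k hk]
    · have hkT : k ∈ T := Finset.mem_filter.mpr ⟨hk, h⟩
      have hmin := hk0min k hkT
      have htc : t * c k ≤ μ k := by
        rw [ht, div_mul_eq_mul_div, div_le_iff₀ hck0]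
        rw [ht, div_le_div_iff₀ hck0 h] at hmin
        nlinarith
      linarith
  have hνsum : ∑ k ∈ I, ν k • γ k = δ := by
    have : ∑ k ∈ I, ν k • γ k = ∑ k ∈ I, μ k • γ k - t • ∑ k ∈ I, c k • γ k := by
      rw [Finset.smul_sum, ← Finset.sum_sub_distrib]
      refine Finset.sum_congr rfl fun k _ => ?_
      simp [hν, sub_smul, mul_smul]
    rw [this, hsum, hcsum, smul_zero, sub_zero]
  have hνsum' : ∑ k ∈ I.erase k0, ν k • γ k = δ := by
    rw [← hνsum]
    apply Finset.sum_erase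
    simp [hνk0]
  obtain ⟨J, hJsub, hJind, ρ, hρnn, hρsum⟩ :=
    ih (I.erase k0) (Finset.erase_ssubset hk0I) δ ν
      (fun k hk => hνnn k (Finset.mem_of_mem_erase hk)) hνsum'
  exact ⟨J, hJsub.trans (Finset.erase_subset _ _), hJind, ρ, hρnn, hρsum⟩

/-- If `δ` lies in the cone generated by `γ₁,…,γₘ` and every subset of the `γ`'s
whose cone contains `δ` has at least `m - n` elements, then at each point `z` of
`Z = {z : Σₖ γₖ|zₖ|² = δ}` the vectors `{γₖ : zₖ ≠ 0}` span `ℝ^{m-n}`. -/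
theorem stmt6 (m n : ℕ) (γ : Fin m → (Fin (m - n) → ℝ)) (δ : Fin (m - n) → ℝ)
    (h1 : ∃ μ : Fin m → ℝ, (∀ k, 0 ≤ μ k) ∧ ∑ k, μ k • γ k = δ)
    (h2 : ∀ I : Finset (Fin m),
      (∃ μ : Fin m → ℝ, (∀ k, 0 ≤ μ k) ∧ (∀ k, k ∉ I → μ k = 0) ∧ ∑ k, μ k • γ k = δ) →
      m - n ≤ I.card)
    (z : Fin m → ℂ) (hz : ∑ k, (‖z k‖ ^ 2) • γ k = δ) :
    Submodule.span ℝ (γ '' {k | z k ≠ 0}) = ⊤ := by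
  classical
  set I0 : Finset (Fin m) := Finset.univ.filter (fun k => z k ≠ 0) with hI0
  have hsum : ∑ k ∈ I0, (‖z k‖ ^ 2) • γ k = δ := by
    rw [← hz]
    apply Finset.sum_subset (Finset.subset_univ _)
    intro k _ hk
    have : z k = 0 := by simpa [hI0] using hk
    simp [this]
  obtain ⟨J, hJsub, hJind, ν, hνnn, hνsum⟩ :=
    caratheodory_cone γ I0 δ (fun k => ‖z k‖ ^ 2) (fun k _ => by positivity) hsum
  have hcard : m - n ≤ J.card := by
    apply h2 J
    refine ⟨fun k => if k ∈ J then ν k else 0, ?_, ?_, ?_⟩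
    · intro k
      dsimp only
      split
      · exact hνnn _ ‹_›
      · exact le_refl 0
    · intro k hk; simp [hk]
    · rw [← hνsum]
      symm
      rw [show (∑ k, (if k ∈ J then ν k else 0) • γ k) =
          ∑ k ∈ J, (if k ∈ J then ν k else 0) • γ k from
        (Finset.sum_subset (Finset.subset_univ _) (fun k _ hk => by simp [hk])).symm]
      exact Finset.sum_congr rfl fun k hk => by simp [hk]
  have hJS : ∀ k ∈ J, k ∈ {k | z k ≠ 0} := by
    intro k hk
    have := hJsub hk
    simpa [hI0] using (Finset.mem_filter.mp this).2
  have hrange : Set.range (fun k : J => γ k) ⊆ γ '' {k | z k ≠ 0} := by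
    rintro _ ⟨k, rfl⟩
    exact ⟨k, hJS k k.2, rfl⟩
  have hfr1 : (J.card : ℕ) =
      Module.finrank ℝ (Submodule.span ℝ (Set.range (fun k : J => γ k))) := by
    rw [finrank_span_eq_card hJind, Fintype.card_coe]
  have hfr2 : Module.finrank ℝ (Submodule.span ℝ (Set.range (fun k : J => γ k))) ≤
      Module.finrank ℝ (Submodule.span ℝ (γ '' {k | z k ≠ 0})) :=
    Submodule.finrank_mono (Submodule.span_mono hrange)
  have hfr3 : Module.finrank ℝ (Submodule.span ℝ (γ '' {k | z k ≠ 0})) ≤ m - n := by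
    calc Module.finrank ℝ (Submodule.span ℝ (γ '' {k | z k ≠ 0}))
        ≤ Module.finrank ℝ (Fin (m - n) → ℝ) := Submodule.finrank_le _
      _ = m - n := by simp
  apply Submodule.eq_top_of_finrank_eq
  have : Module.finrank ℝ (Fin (m - n) → ℝ) = m - n := by simp
  omega
end

section
/- Conversely, if δ lies in the cone generated by some m−n−1 of the vectors γ₁,…,γₘ (i.e., δ ∈ ℝ≥⟨γ_{i₁},…,γ_{i_{m−n−1}}⟩), then there exists a point z in Z = {z ∈ ℂᵐ : Σₖ γₖ|zₖ|² = δ} such that at least n+1 coordinates of z vanish and the set {γₖ : zₖ ≠ 0} does not span ℝ^{m−n}. -/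
/-- If `δ` lies in the cone generated by some `m - n - 1` of the vectors `γ₁,…,γₘ`,
then there is a point `z ∈ Z = {z : Σₖ γₖ|zₖ|² = δ}` with at least `n + 1` zero
coordinates, at which the vectors `{γₖ : zₖ ≠ 0}` do not span `ℝ^{m-n}`. -/
theorem stmt7 (m n : ℕ) (hn : n < m)
    (γ : Fin m → (Fin (m - n) → ℝ)) (δ : Fin (m - n) → ℝ)
    (I : Finset (Fin m)) (hcard : I.card = m - n - 1)
    (hδ : ∃ μ : Fin m → ℝ, (∀ k, 0 ≤ μ k) ∧ (∀ k, k ∉ I → μ k = 0) ∧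
      ∑ k, μ k • γ k = δ) :
    ∃ z : Fin m → ℂ, ∑ k, (‖z k‖ ^ 2) • γ k = δ ∧
      n + 1 ≤ {k | z k = 0}.ncard ∧
      Submodule.span ℝ (γ '' {k | z k ≠ 0}) ≠ ⊤ := by
  obtain ⟨μ, hμ0, hμI, hμsum⟩ := hδ
  refine ⟨fun k => if k ∈ I then (Real.sqrt (μ k) : ℂ) else 0, ?_, ?_, ?_⟩
  · rw [← hμsum]
    refine Finset.sum_congr rfl fun k _ => ?_
    by_cases hk : k ∈ I
    · simp [hk, Complex.norm_real, abs_of_nonneg (Real.sqrt_nonneg _),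
        Real.sq_sqrt (hμ0 k)]
    · simp [hk, hμI k hk]
  · show n + 1 ≤ {k | (if k ∈ I then (Real.sqrt (μ k) : ℂ) else 0) = 0}.ncard
    have hsub : (↑Iᶜ : Set (Fin m)) ⊆ {k | (if k ∈ I then (Real.sqrt (μ k) : ℂ) else 0) = 0} := by
      intro k hk
      simp only [Finset.coe_compl, Set.mem_compl_iff, Finset.mem_coe] at hk
      simp [hk]
    have := Set.ncard_le_ncard hsub (Set.toFinite _)
    have hc : (↑Iᶜ : Set (Fin m)).ncard = Iᶜ.card := by
      rw [Set.ncard_coe_finset]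
    rw [Finset.card_compl, hcard, Fintype.card_fin] at hc
    omega
  · intro htop
    have hsub : {k | (if k ∈ I then (Real.sqrt (μ k) : ℂ) else 0) ≠ 0} ⊆ (↑I : Set (Fin m)) := by
      intro k hk
      by_contra hkI
      simp only [Set.mem_setOf_eq, if_neg (fun h => hkI (Finset.mem_coe.mpr h))] at hk
      exact hk rfl
    have hle : Submodule.span ℝ (γ '' {k | (if k ∈ I then (Real.sqrt (μ k) : ℂ) else 0) ≠ 0})
        ≤ Submodule.span ℝ (↑(I.image γ) : Set (Fin (m - n) → ℝ)) := by
      apply Submodule.span_mono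
      rw [Finset.coe_image]
      exact Set.image_mono hsub
    rw [htop] at hle
    have htop' : Submodule.span ℝ (↑(I.image γ) : Set (Fin (m - n) → ℝ)) = ⊤ :=
      top_le_iff.mp hle
    have h1 : Module.finrank ℝ (Submodule.span ℝ (↑(I.image γ) : Set (Fin (m - n) → ℝ)))
        ≤ (I.image γ).card := finrank_span_finset_le_card _
    rw [htop', finrank_top] at h1
    have h2 : (I.image γ).card ≤ I.card := Finset.card_image_le
    have h3 : Module.finrank ℝ (Fin (m - n) → ℝ) = m - n := by
      simp [Module.finrank_pi]
    omega
end

section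
/- Let T_Γ = {(e^{2πi⟨γ₁,φ⟩},…,e^{2πi⟨γₘ,φ⟩}) : φ ∈ ℝ^{m−n}} ⊆ 𝕋ᵐ act coordinatewise on ℂᵐ, and let z ∈ ℂᵐ be such that the vectors {γₖ : zₖ ≠ 0} span ℝ^{m−n}, where γ₁,…,γₘ generate a full-rank lattice L in ℝ^{m−n}. Then the stabiliser of z in T_Γ is finite; explicitly it is L_z*/L*, where L_z = ℤ⟨γₖ : zₖ ≠ 0⟩ and L* denotes the dual lattice. -/
open Submodule Module

section Aux

variable {d m : ℕ}

/-- Pairing of two vectors. -/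
private def pr (v φ : Fin d → ℝ) : ℝ := ∑ i, v i * φ i

private lemma pr_int_of_span {φ : Fin d → ℝ} {s : Set (Fin d → ℝ)}
    (h : ∀ v ∈ s, ∃ r : ℤ, ∑ i, v i * φ i = (r : ℝ)) :
    ∀ v ∈ Submodule.span ℤ s, ∃ r : ℤ, ∑ i, v i * φ i = (r : ℝ) := by
  intro v hv
  induction hv using Submodule.span_induction with
  | mem x hx => exact h x hx
  | zero => exact ⟨0, by simp⟩
  | add x y _ _ hx hy =>
      obtain ⟨r, hr⟩ := hx
      obtain ⟨t, ht⟩ := hy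
      refine ⟨r + t, ?_⟩
      push_cast
      rw [← hr, ← ht, ← Finset.sum_add_distrib]
      simp [add_mul]
  | smul a x _ hx =>
      obtain ⟨r, hr⟩ := hx
      refine ⟨a * r, ?_⟩
      push_cast
      rw [← hr, Finset.mul_sum]
      refine Finset.sum_congr rfl fun i _ => ?_
      simp [zsmul_eq_mul]
      ring

end Aux

/-- The "dual lattice with respect to a subset `S` of the indices":
vectors `φ ∈ ℝᵈ` whose scalar products with all `γₖ`, `k ∈ S`, are integers. -/
def dualLat (d m : ℕ) (γ : Fin m → (Fin d → ℝ)) (S : Set (Fin m)) :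
    AddSubgroup (Fin d → ℝ) where
  carrier := {φ | ∀ k ∈ S, ∃ r : ℤ, ∑ i, γ k i * φ i = (r : ℝ)}
  zero_mem' := by
    intro k _
    exact ⟨0, by simp⟩
  add_mem' := by
    intro φ ψ hφ hψ k hk
    obtain ⟨r, hr⟩ := hφ k hk
    obtain ⟨s, hs⟩ := hψ k hk
    refine ⟨r + s, ?_⟩
    push_cast
    rw [← hr, ← hs, ← Finset.sum_add_distrib]
    simp [Pi.add_apply, mul_add]
  neg_mem' := by
    intro φ hφ k hk
    obtain ⟨r, hr⟩ := hφ k hk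
    refine ⟨-r, ?_⟩
    push_cast
    rw [← hr, ← Finset.sum_neg_distrib]
    simp [mul_neg]



private noncomputable def dotL {d : ℕ} (φ : Fin d → ℝ) : (Fin d → ℝ) →ₗ[ℝ] ℝ where
  toFun v := ∑ i, v i * φ i
  map_add' v w := by
    rw [← Finset.sum_add_distrib]
    exact Finset.sum_congr rfl fun i _ => by simp [add_mul]
  map_smul' c v := by
    simp only [RingHom.id_apply, smul_eq_mul, Finset.mul_sum]
    exact Finset.sum_congr rfl fun i _ => by simp; ring

open Classical in
private noncomputable def pairMap (d m : ℕ) (γ : Fin m → (Fin d → ℝ)) (z : Fin m → ℂ) :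
    (Fin d → ℝ) →ₗ[ℝ] (Fin m → ℝ) where
  toFun φ := fun k => if z k ≠ 0 then ∑ i, γ k i * φ i else 0
  map_add' φ ψ := by
    funext k
    by_cases h : z k ≠ 0
    · simp only [Pi.add_apply, if_pos h]
      rw [← Finset.sum_add_distrib]
      exact Finset.sum_congr rfl fun i _ => mul_add _ _ _
    · simp only [Pi.add_apply, if_neg h, add_zero]
  map_smul' c φ := by
    funext k
    by_cases h : z k ≠ 0
    · simp only [Pi.smul_apply, smul_eq_mul, RingHom.id_apply, if_pos h, Finset.mul_sum]
      exact Finset.sum_congr rfl fun i _ => by ring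
    · simp only [Pi.smul_apply, if_neg h, RingHom.id_apply, smul_zero]

private lemma int_vec_mem {m : ℕ} (x : Fin m → ℝ) (h : ∀ j, ∃ r : ℤ, x j = r) :
    x ∈ Submodule.span ℤ (Set.range fun j : Fin m => (Pi.single j (1:ℝ) : Fin m → ℝ)) := by
  choose r hr using h
  have hx : x = ∑ j, (r j) • (Pi.single j (1:ℝ) : Fin m → ℝ) := by
    funext i
    rw [Finset.sum_apply]
    have : ∀ j, (r j • (Pi.single j (1:ℝ) : Fin m → ℝ)) i
        = if j = i then (r j : ℝ) else 0 := by
      intro j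
      by_cases hj : j = i
      · subst hj; simp
      · simp [Pi.single_apply, hj]
    rw [Finset.sum_congr rfl fun j _ => this j]
    simp [hr i]
  rw [hx]
  exact Submodule.sum_mem _ fun j _ =>
    Submodule.smul_mem _ _ (Submodule.subset_span ⟨j, rfl⟩)

/-- Let `γ₁,…,γₘ` generate a full-rank lattice `L` in `ℝᵈ` (`d = m - n`), acting on
`ℂᵐ` by `φ · z = (e^{2πi⟨γ₁,φ⟩}z₁, …, e^{2πi⟨γₘ,φ⟩}zₘ)`.  If the vectors
`{γₖ : zₖ ≠ 0}` span `ℝᵈ`, then the stabiliser of `z` (the set of `φ` fixing `z`)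
is exactly the dual lattice `L_z*` of `L_z = ℤ⟨γₖ : zₖ ≠ 0⟩`, and the quotient
`L_z*/L*` is finite. -/
theorem stmt12 (d m : ℕ) (γ : Fin m → (Fin d → ℝ)) (z : Fin m → ℂ)
    (hdisc : DiscreteTopology (AddSubgroup.closure (Set.range γ) : AddSubgroup (Fin d → ℝ)))
    (hfull : Submodule.span ℝ (Set.range γ) = ⊤)
    (hz : Submodule.span ℝ (γ '' {k | z k ≠ 0}) = ⊤) :
    {φ : Fin d → ℝ | ∀ k, Complex.exp (((2 * Real.pi : ℝ) : ℂ) * Complex.I *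
        ((∑ i, γ k i * φ i : ℝ) : ℂ)) * z k = z k}
      = (dualLat d m γ {k | z k ≠ 0} : Set (Fin d → ℝ)) ∧
    Finite ((dualLat d m γ {k | z k ≠ 0}) ⧸
      ((dualLat d m γ Set.univ).addSubgroupOf (dualLat d m γ {k | z k ≠ 0}))) := by
  classical
  set S : Set (Fin m) := {k | z k ≠ 0} with hS
  -- Part 1
  have part1 : {φ : Fin d → ℝ | ∀ k, Complex.exp (((2 * Real.pi : ℝ) : ℂ) * Complex.I *
        ((∑ i, γ k i * φ i : ℝ) : ℂ)) * z k = z k}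
      = (dualLat d m γ S : Set (Fin d → ℝ)) := by
    ext φ
    constructor
    · intro hφ k hk
      have h1 : Complex.exp (((2 * Real.pi : ℝ) : ℂ) * Complex.I *
          ((∑ i, γ k i * φ i : ℝ) : ℂ)) = 1 := by
        have h := hφ k
        have hzk : z k ≠ 0 := hk
        nth_rewrite 2 [← one_mul (z k)] at h
        exact mul_right_cancel₀ hzk h
      rw [Complex.exp_eq_one_iff] at h1
      obtain ⟨n, hn⟩ := h1
      refine ⟨n, ?_⟩
      have h2 : (2 * (Real.pi : ℂ) * Complex.I) * ((∑ i, γ k i * φ i : ℝ) : ℂ)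
          = (2 * (Real.pi : ℂ) * Complex.I) * (n : ℂ) := by
        rw [mul_comm ((2 * (Real.pi : ℂ) * Complex.I)) ((n : ℂ))]
        rw [← hn]
        push_cast
        ring
      have h3 := mul_left_cancel₀ Complex.two_pi_I_ne_zero h2
      exact_mod_cast h3
    · intro hφ k
      by_cases hk : z k = 0
      · simp [hk]
      · obtain ⟨r, hr⟩ := hφ k hk
        rw [hr]
        have : ((2 * Real.pi : ℝ) : ℂ) * Complex.I * ((r : ℝ) : ℂ)
            = (r : ℂ) * (2 * (Real.pi : ℂ) * Complex.I) := by push_cast; ring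
        rw [this, Complex.exp_int_mul_two_pi_mul_I, one_mul]
  refine ⟨part1, ?_⟩
  -- Part 2
  -- notation
  set K : AddSubgroup (Fin d → ℝ) := dualLat d m γ S with hK
  set H : AddSubgroup (Fin d → ℝ) := dualLat d m γ Set.univ with hHdef
  set LM : Submodule ℤ (Fin d → ℝ) := Submodule.span ℤ (Set.range γ) with hLM
  set LzM : Submodule ℤ (Fin d → ℝ) := Submodule.span ℤ (γ '' S) with hLzM
  have hLsets : ((LM : Set (Fin d → ℝ))) = (AddSubgroup.closure (Set.range γ) : Set (Fin d → ℝ)) := by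
    rw [← Submodule.span_int_eq_addSubgroupClosure]
    rfl
  have hle : LzM ≤ LM := Submodule.span_mono (Set.image_subset_range γ S)
  have hdiscL : DiscreteTopology LM := by
    refine DiscreteTopology.of_subset hdisc ?_
    rw [hLsets]
  have hdiscLz : DiscreteTopology LzM := by
    refine DiscreteTopology.of_subset hdisc ?_
    rw [← hLsets]
    exact hle
  have hlatL : IsZLattice ℝ LM := ⟨by rw [hLM, Submodule.span_span_of_tower, hfull]⟩
  have hlatLz : IsZLattice ℝ LzM := ⟨by rw [hLzM, Submodule.span_span_of_tower, hz]⟩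
  -- torsion of LM / LzM
  have hrankL : finrank ℤ LM = d := by
    rw [ZLattice.rank ℝ LM]
    simp
  have hrankLz : finrank ℤ LzM = d := by
    rw [ZLattice.rank ℝ LzM]
    simp
  have hfinL : Module.Finite ℤ LM := ZLattice.module_finite ℝ LM
  set N : Submodule ℤ LM := LzM.comap LM.subtype with hN
  have hrankN : finrank ℤ N = d := by
    rw [(Submodule.comapSubtypeEquivOfLe hle).finrank_eq, hrankLz]
  have hQfin : Module.Finite ℤ (LM ⧸ N) := Module.Finite.quotient ℤ N
  have hQrank : finrank ℤ (LM ⧸ N) = 0 := by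
    have h1 := Submodule.rank_quotient_add_rank N
    have hlt : Module.rank ℤ LM < Cardinal.aleph0 := Module.rank_lt_aleph0 ℤ LM
    have hltQ : Module.rank ℤ (LM ⧸ N) < Cardinal.aleph0 := by
      refine lt_of_le_of_lt ?_ hlt
      rw [← h1]; exact le_self_add
    have hltN : Module.rank ℤ N < Cardinal.aleph0 := by
      refine lt_of_le_of_lt ?_ hlt
      rw [← h1]; exact le_add_self
    have h2 : finrank ℤ (LM ⧸ N) + finrank ℤ N = finrank ℤ LM := by
      have := congrArg Cardinal.toNat h1
      rwa [Cardinal.toNat_add hltQ hltN] at this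
    omega
  have htor : Module.IsTorsion ℤ (LM ⧸ N) :=
    (Module.finrank_eq_zero_iff_isTorsion).mp hQrank
  -- For each k, some positive multiple of γ k lies in LzM
  have hmul : ∀ k : Fin m, ∃ a : ℤ, a ≠ 0 ∧ a • γ k ∈ LzM := by
    intro k
    have hmem : γ k ∈ LM := Submodule.subset_span ⟨k, rfl⟩
    obtain ⟨a, ha⟩ := htor (x := Submodule.Quotient.mk (⟨γ k, hmem⟩ : LM))
    refine ⟨(a : ℤ), nonZeroDivisors.coe_ne_zero a, ?_⟩
    rw [← Submodule.Quotient.mk_smul, Submodule.Quotient.mk_eq_zero] at ha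
    exact ha
  choose a ha0 haz using hmul
  set n : ℕ := ∏ k, (a k).natAbs with hn
  have hnpos : 0 < n := Finset.prod_pos fun k _ => Int.natAbs_pos.mpr (ha0 k)
  have hnγ : ∀ k : Fin m, (n : ℤ) • γ k ∈ LzM := by
    intro k
    have h1 : (a k).natAbs ∣ n := Finset.dvd_prod_of_mem _ (Finset.mem_univ k)
    have hdvd : a k ∣ (n : ℤ) := Int.natAbs_dvd.mp (Int.ofNat_dvd.mpr h1)
    obtain ⟨c, hc⟩ := hdvd
    rw [hc, mul_comm, mul_smul]
    exact Submodule.smul_mem _ c (haz k)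
  -- torsion of the quotient group
  set Q := K ⧸ (H.addSubgroupOf K) with hQ
  have hKmem : ∀ x : K, ∀ k ∈ S, ∃ r : ℤ, ∑ i, γ k i * (x : Fin d → ℝ) i = (r : ℝ) := by
    intro x k hk
    exact x.2 k hk
  have htorQ : AddMonoid.IsTorsion Q := by
    intro q
    obtain ⟨x, rfl⟩ := QuotientAddGroup.mk_surjective q
    rw [isOfFinAddOrder_iff_nsmul_eq_zero]
    refine ⟨n, hnpos, ?_⟩
    have hmk : (n • QuotientAddGroup.mk x : Q) = QuotientAddGroup.mk (n • x) :=
      (map_nsmul (QuotientAddGroup.mk' (H.addSubgroupOf K)) n x).symm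
    rw [hmk, QuotientAddGroup.eq_zero_iff]
    -- need : ↑(n • x) ∈ H
    intro k _
    have h1 : ∀ v ∈ LzM, ∃ r : ℤ, ∑ i, v i * (x : Fin d → ℝ) i = (r : ℝ) := by
      refine pr_int_of_span ?_
      rintro v ⟨j, hj, rfl⟩
      exact hKmem x j hj
    obtain ⟨r, hr⟩ := h1 _ (hnγ k)
    refine ⟨r, ?_⟩
    rw [← hr]
    show ∑ i, γ k i * ((n • x : K) : Fin d → ℝ) i = _
    have hco : ((n • x : K) : Fin d → ℝ) = n • (x : Fin d → ℝ) :=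
      map_nsmul K.subtype n x
    rw [hco]
    refine Finset.sum_congr rfl fun i _ => ?_
    simp only [Pi.smul_apply, nsmul_eq_mul, zsmul_eq_mul]
    push_cast
    ring
  -- finite generation of K
  set A : (Fin d → ℝ) →ₗ[ℤ] (Fin m → ℝ) := (pairMap d m γ z).restrictScalars ℤ with hA
  have hAinj : Function.Injective A := by
    rw [← LinearMap.ker_eq_bot, Submodule.eq_bot_iff]
    intro φ hφ
    have hφ0 : ∀ k ∈ S, ∑ i, γ k i * φ i = 0 := by
      intro k hk
      have : A φ k = 0 := by rw [hφ]; rfl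
      simpa [hA, pairMap, Set.mem_setOf_eq.mp hk] using this
    have hker : Submodule.span ℝ (γ '' S) ≤ LinearMap.ker (dotL φ) := by
      rw [Submodule.span_le]
      rintro v ⟨j, hj, rfl⟩
      exact hφ0 j hj
    have hφφ : dotL φ φ = 0 := by
      have : (⊤ : Submodule ℝ (Fin d → ℝ)) ≤ LinearMap.ker (dotL φ) := hz ▸ hker
      exact this (Submodule.mem_top)
    have : ∑ i, φ i * φ i = 0 := hφφ
    funext i
    have := (Finset.sum_eq_zero_iff_of_nonneg (fun i _ => mul_self_nonneg (φ i))).mp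
      this i (Finset.mem_univ i)
    exact mul_self_eq_zero.mp this
  set Zsp : Submodule ℤ (Fin m → ℝ) :=
    Submodule.span ℤ (Set.range fun j : Fin m => (Pi.single j (1:ℝ) : Fin m → ℝ)) with hZsp
  set KM : Submodule ℤ (Fin d → ℝ) := AddSubgroup.toIntSubmodule K with hKM
  have hmaple : KM.map A ≤ Zsp := by
    rintro _ ⟨φ, hφ, rfl⟩
    refine int_vec_mem _ fun j => ?_
    by_cases hj : z j ≠ 0
    · obtain ⟨r, hr⟩ := hφ j hj
      exact ⟨r, by simpa [hA, pairMap, hj] using hr⟩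
    · exact ⟨0, by simp [hA, pairMap, hj]⟩
  have hZfin : Module.Finite ℤ Zsp :=
    Module.Finite.iff_fg.mpr (Submodule.fg_span (Set.finite_range _))
  have hNoeth : IsNoetherian ℤ Zsp := isNoetherian_of_isNoetherianRing_of_finite ℤ Zsp
  have hKMfin : Module.Finite ℤ KM := by
    have e1 : KM ≃ₗ[ℤ] KM.map A := Submodule.equivMapOfInjective A hAinj KM
    have e2 : ((KM.map A).comap Zsp.subtype) ≃ₗ[ℤ] KM.map A :=
      Submodule.comapSubtypeEquivOfLe hmaple
    have : Module.Finite ℤ ((KM.map A).comap Zsp.subtype) :=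
      Module.Finite.iff_fg.mpr (IsNoetherian.noetherian _)
    exact Module.Finite.equiv (e2.trans e1.symm)
  have hKfg : AddGroup.FG K := Module.Finite.iff_addGroup_fg.mp hKMfin
  have hQfg : AddGroup.FG Q :=
    AddGroup.fg_of_surjective (f := QuotientAddGroup.mk' (H.addSubgroupOf K))
      (QuotientAddGroup.mk'_surjective _)
  exact AddCommGroup.finite_of_fg_torsion Q htorQ
end

section
/- Let a₁,…,aₘ ∈ ℝⁿ and let A : ℝᵐ → ℝⁿ be the linear map eᵢ ↦ aᵢ. Define R = exp(ker A) = {(e^{y₁},…,e^{yₘ}) : y ∈ ker A} ⊆ ℝᵐ_{>0}. Suppose K is a simplicial complex on [m] such that {aᵢ : i ∈ I} is linearly independent for every I ∈ K. Then the coordinatewise multiplication action of R on U(K) = ⋃_{I∈K}(ℂ,ℂ×)^I is free. -/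
/-- Freeness of the action of `R = exp(ker A)` on `U(K)`.  If
`{aᵢ : i ∈ I}` is linearly independent for every simplex `I ∈ K`, `A y = 0`, and
the element `(e^{y₁},…,e^{yₘ}) ∈ R` fixes some point `z ∈ U(K)`, then `y = 0`. -/
theorem stmt16 (m n : ℕ) (a : Fin m → (Fin n → ℝ))
    (A : (Fin m → ℝ) →ₗ[ℝ] (Fin n → ℝ)) (hA : ∀ i, A (Pi.single i 1) = a i)
    (K : Set (Finset (Fin m)))
    (hind : ∀ I ∈ K, LinearIndependent ℝ (fun i : I => a i.1))
    (y : Fin m → ℝ) (hy : A y = 0)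
    (z : Fin m → ℂ)
    (hz : z ∈ ⋃ I ∈ K, {z : Fin m → ℂ | ∀ j ∉ I, z j ≠ 0})
    (hfix : ∀ k, ((Real.exp (y k) : ℝ) : ℂ) * z k = z k) :
    y = 0 := by
  simp only [Set.mem_iUnion] at hz
  obtain ⟨I, hIK, hzI⟩ := hz
  -- outside I, y j = 0
  have hout : ∀ j ∉ I, y j = 0 := by
    intro j hj
    have hzj := hzI j hj
    have h0 : (((Real.exp (y j) : ℝ) : ℂ) - 1) * z j = 0 := by
      have := hfix j
      ring_nf
      linear_combination this
    rcases mul_eq_zero.mp h0 with h | h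
    · have h1 : Real.exp (y j) = 1 := by
        have h2 : ((Real.exp (y j) : ℝ) : ℂ) = 1 := sub_eq_zero.mp h
        exact_mod_cast h2
      have := Real.exp_eq_exp.mp (h1.trans Real.exp_zero.symm)
      exact this
    · exact absurd h hzj
  -- y = sum over i of y i • single i 1
  have hsum : y = ∑ i ∈ I, y i • (Pi.single i 1 : Fin m → ℝ) := by
    funext k
    by_cases hk : k ∈ I
    · rw [Finset.sum_apply]
      rw [Finset.sum_eq_single k]
      · simp
      · intro b _ hb
        simp [Pi.single_apply, hb.symm]
      · intro h; exact absurd hk h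
    · rw [Finset.sum_apply, hout k hk]
      symm
      apply Finset.sum_eq_zero
      intro b hb
      have : b ≠ k := fun h => hk (h ▸ hb)
      simp [Pi.single_apply, this]
  have hAy : ∑ i ∈ I, y i • a i = 0 := by
    calc ∑ i ∈ I, y i • a i = ∑ i ∈ I, y i • A ((Pi.single i 1 : Fin m → ℝ)) := by
          simp only [hA]
      _ = A (∑ i ∈ I, y i • (Pi.single i 1 : Fin m → ℝ)) := by
          rw [map_sum]; simp only [map_smul]
      _ = A y := by rw [← hsum]
      _ = 0 := hy
  -- linear independence on I
  have hli := hind I hIK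
  have hzero : ∀ i ∈ I, y i = 0 := by
    have := Fintype.linearIndependent_iff.mp hli (fun i => y i.1) ?_
    · intro i hi; exact this ⟨i, hi⟩
    · rw [← hAy, ← Finset.sum_coe_sort I (fun i => y i • a i)]
  funext k
  by_cases hk : k ∈ I
  · exact hzero k hk
  · exact hout k hk
end

section
/- Let R(p,q) = {u ∈ ℝᵐ : Σₖ γ₁ₖuₖ² = c, Σₖ γ₂ₖuₖ² = 0} where c > 0, γ₁ₖ > 0 for all k, γ₂ₖ > 0 for k ≤ p and γ₂ₖ < 0 for k > p, with 0 < p < m. Then R(p,q) is homeomorphic to S^{p−1} × S^{q−1} where q = m − p. -/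
open Finset

noncomputable section QuadricAux

/-- quadratic form with coefficients `a` -/
def qf {n : ℕ} (a x : Fin n → ℝ) : ℝ := ∑ i, a i * x i ^ 2

lemma qf_nonneg {n : ℕ} {a : Fin n → ℝ} (ha : ∀ i, 0 ≤ a i) (x : Fin n → ℝ) :
    0 ≤ qf a x :=
  Finset.sum_nonneg fun i _ => mul_nonneg (ha i) (sq_nonneg _)

lemma qf_pos {n : ℕ} {a : Fin n → ℝ} (ha : ∀ i, 0 < a i) {x : Fin n → ℝ} (hx : x ≠ 0) :
    0 < qf a x := by
  obtain ⟨i, hi⟩ := Function.ne_iff.mp hx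
  exact Finset.sum_pos' (fun j _ => mul_nonneg (ha j).le (sq_nonneg _))
    ⟨i, Finset.mem_univ i, mul_pos (ha i) (sq_pos_of_ne_zero hi)⟩

lemma qf_eq_zero {n : ℕ} {a : Fin n → ℝ} (ha : ∀ i, 0 < a i) {x : Fin n → ℝ}
    (h : qf a x = 0) : x = 0 := by
  by_contra hx
  exact (qf_pos ha hx).ne' h

lemma qf_smul {n : ℕ} (a : Fin n → ℝ) (r : ℝ) (x : Fin n → ℝ) :
    qf a (fun i => r * x i) = r ^ 2 * qf a x := by
  simp only [qf, Finset.mul_sum, mul_pow]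
  congr 1; ext i; ring

lemma sumsq_pos {n : ℕ} {v : Fin n → ℝ} (hv : v ≠ 0) : 0 < ∑ i, v i ^ 2 := by
  obtain ⟨i, hi⟩ := Function.ne_iff.mp hv
  exact Finset.sum_pos' (fun j _ => sq_nonneg _)
    ⟨i, Finset.mem_univ i, sq_pos_of_ne_zero hi⟩

/-- inclusion of plain functions into Euclidean space -/
def toE {n : ℕ} (v : Fin n → ℝ) : EuclideanSpace ℝ (Fin n) :=
  (WithLp.equiv 2 (Fin n → ℝ)).symm v

@[simp] lemma toE_apply {n : ℕ} (v : Fin n → ℝ) (i : Fin n) : toE v i = v i := rfl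

lemma norm_toE {n : ℕ} (v : Fin n → ℝ) : ‖toE v‖ = Real.sqrt (∑ i, v i ^ 2) := by
  rw [EuclideanSpace.norm_eq]
  congr 1
  refine Finset.sum_congr rfl fun i _ => ?_
  rw [toE_apply, Real.norm_eq_abs, sq_abs]

lemma norm_normalize {n : ℕ} {v : Fin n → ℝ} (hv : v ≠ 0) :
    ‖toE (fun i => v i / Real.sqrt (∑ i, v i ^ 2))‖ = 1 := by
  have h0 : 0 < ∑ i, v i ^ 2 := sumsq_pos hv
  rw [norm_toE, Real.sqrt_eq_one]
  calc ∑ i, (v i / Real.sqrt (∑ i, v i ^ 2)) ^ 2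
      = ∑ i, v i ^ 2 / (∑ i, v i ^ 2) := by
        refine Finset.sum_congr rfl fun i _ => ?_
        rw [div_pow, Real.sq_sqrt h0.le]
    _ = 1 := by rw [← Finset.sum_div, div_self h0.ne']

end QuadricAux

section QuadricMain

variable {p q : ℕ}

/-- forward map: from a pair of (unit) vectors to a point of the quadric -/
noncomputable def fwd (α δ : Fin p → ℝ) (β ε : Fin q → ℝ) (c : ℝ)
    (x : EuclideanSpace ℝ (Fin p)) (y : EuclideanSpace ℝ (Fin q)) :
    (Fin p → ℝ) × (Fin q → ℝ) :=
  (fun i => Real.sqrt (c * qf ε y / (qf α x * qf ε y + qf β y * qf δ x)) * x i,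
   fun j => Real.sqrt (c * qf δ x / (qf α x * qf ε y + qf β y * qf δ x)) * y j)

/-- backward map: normalization of the two halves -/
noncomputable def bwd (z : (Fin p → ℝ) × (Fin q → ℝ)) :
    EuclideanSpace ℝ (Fin p) × EuclideanSpace ℝ (Fin q) :=
  (toE (fun i => z.1 i / Real.sqrt (∑ i, z.1 i ^ 2)),
   toE (fun j => z.2 j / Real.sqrt (∑ j, z.2 j ^ 2)))

variable {α δ : Fin p → ℝ} {β ε : Fin q → ℝ} {c : ℝ}

lemma fwd_mem (hc : 0 < c) (hα : ∀ i, 0 < α i) (hδ : ∀ i, 0 < δ i)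
    (hβ : ∀ j, 0 < β j) (hε : ∀ j, 0 < ε j)
    {x : EuclideanSpace ℝ (Fin p)} {y : EuclideanSpace ℝ (Fin q)}
    (hx : x ≠ 0) (hy : y ≠ 0) :
    qf α (fwd α δ β ε c x y).1 + qf β (fwd α δ β ε c x y).2 = c ∧
    qf δ (fwd α δ β ε c x y).1 = qf ε (fwd α δ β ε c x y).2 := by
  have hxf : (x : Fin p → ℝ) ≠ 0 := by intro h; apply hx; ext i; exact congrFun h i
  have hyf : (y : Fin q → ℝ) ≠ 0 := by intro h; apply hy; ext i; exact congrFun h i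
  have hD : 0 < qf α x * qf ε y + qf β y * qf δ x :=
    add_pos (mul_pos (qf_pos hα hxf) (qf_pos hε hyf))
      (mul_pos (qf_pos hβ hyf) (qf_pos hδ hxf))
  have hs : Real.sqrt (c * qf ε y / (qf α x * qf ε y + qf β y * qf δ x)) ^ 2
      = c * qf ε y / (qf α x * qf ε y + qf β y * qf δ x) :=
    Real.sq_sqrt (le_of_lt (div_pos (mul_pos hc (qf_pos hε hyf)) hD))
  have ht : Real.sqrt (c * qf δ x / (qf α x * qf ε y + qf β y * qf δ x)) ^ 2
      = c * qf δ x / (qf α x * qf ε y + qf β y * qf δ x) :=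
    Real.sq_sqrt (le_of_lt (div_pos (mul_pos hc (qf_pos hδ hxf)) hD))
  have hDne : qf α x * qf ε y + qf β y * qf δ x ≠ 0 := hD.ne'
  unfold fwd
  rw [qf_smul, qf_smul, qf_smul, qf_smul, hs, ht]
  constructor
  · field_simp
    rw [div_self (by intro h; apply hDne; linarith)]
  · ring

lemma mem_ne_zero (hc : 0 < c) (hα : ∀ i, 0 < α i) (hδ : ∀ i, 0 < δ i)
    (hβ : ∀ j, 0 < β j) (hε : ∀ j, 0 < ε j)
    {z : (Fin p → ℝ) × (Fin q → ℝ)}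
    (h1 : qf α z.1 + qf β z.2 = c) (h2 : qf δ z.1 = qf ε z.2) :
    z.1 ≠ 0 ∧ z.2 ≠ 0 := by
  have hz1 : z.1 ≠ 0 := by
    intro hv
    have e1 : qf δ z.1 = 0 := by rw [hv]; simp [qf]
    have e2 : z.2 = 0 := qf_eq_zero hε (h2.symm.trans e1)
    rw [hv, e2] at h1
    simp [qf] at h1
    exact hc.ne h1
  refine ⟨hz1, fun hw => ?_⟩
  have e1 : qf ε z.2 = 0 := by rw [hw]; simp [qf]
  exact hz1 (qf_eq_zero hδ (h2.trans e1))

@[simp] lemma qf_toE {n : ℕ} (A : Fin n → ℝ) (g : Fin n → ℝ) : qf A (toE g) = qf A g := rfl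

lemma bwd_fwd (hc : 0 < c) (hα : ∀ i, 0 < α i) (hδ : ∀ i, 0 < δ i)
    (hβ : ∀ j, 0 < β j) (hε : ∀ j, 0 < ε j)
    {x : EuclideanSpace ℝ (Fin p)} {y : EuclideanSpace ℝ (Fin q)}
    (hx1 : ∑ i, x i ^ 2 = 1) (hy1 : ∑ j, y j ^ 2 = 1) :
    bwd (fwd α δ β ε c x y) = (x, y) := by
  have hxf : (x : Fin p → ℝ) ≠ 0 := by
    intro h
    rw [h] at hx1
    simp at hx1
  have hyf : (y : Fin q → ℝ) ≠ 0 := by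
    intro h
    rw [h] at hy1
    simp at hy1
  have hD : 0 < qf α x * qf ε y + qf β y * qf δ x :=
    add_pos (mul_pos (qf_pos hα hxf) (qf_pos hε hyf))
      (mul_pos (qf_pos hβ hyf) (qf_pos hδ hxf))
  set s := Real.sqrt (c * qf ε y / (qf α x * qf ε y + qf β y * qf δ x)) with hsdef
  set t := Real.sqrt (c * qf δ x / (qf α x * qf ε y + qf β y * qf δ x)) with htdef
  have hspos : 0 < s := Real.sqrt_pos.mpr
    (div_pos (mul_pos hc (qf_pos hε hyf)) hD)
  have htpos : 0 < t := Real.sqrt_pos.mpr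
    (div_pos (mul_pos hc (qf_pos hδ hxf)) hD)
  have hsum1 : ∑ i, (s * x i) ^ 2 = s ^ 2 := by
    simp only [mul_pow, ← Finset.mul_sum]
    rw [hx1, mul_one]
  have hsum2 : ∑ j, (t * y j) ^ 2 = t ^ 2 := by
    simp only [mul_pow, ← Finset.mul_sum]
    rw [hy1, mul_one]
  refine Prod.ext ?_ ?_
  · show toE (fun i => (s * x i) / Real.sqrt (∑ i, (s * x i) ^ 2)) = x
    rw [hsum1, Real.sqrt_sq hspos.le]
    have : (fun i => s * x i / s) = fun i => x i :=
      funext fun i => mul_div_cancel_left₀ (x i) hspos.ne'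
    rw [this]
    rfl
  · show toE (fun j => (t * y j) / Real.sqrt (∑ j, (t * y j) ^ 2)) = y
    rw [hsum2, Real.sqrt_sq htpos.le]
    have : (fun j => t * y j / t) = fun j => y j :=
      funext fun j => mul_div_cancel_left₀ (y j) htpos.ne'
    rw [this]
    rfl

lemma fwd_bwd (hc : 0 < c) (hα : ∀ i, 0 < α i) (hδ : ∀ i, 0 < δ i)
    (hβ : ∀ j, 0 < β j) (hε : ∀ j, 0 < ε j)
    {z : (Fin p → ℝ) × (Fin q → ℝ)}
    (h1 : qf α z.1 + qf β z.2 = c) (h2 : qf δ z.1 = qf ε z.2) :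
    fwd α δ β ε c (bwd z).1 (bwd z).2 = z := by
  obtain ⟨hz1, hz2⟩ := mem_ne_zero hc hα hδ hβ hε h1 h2
  obtain ⟨v, w⟩ := z
  simp only at h1 h2 hz1 hz2
  set a := Real.sqrt (∑ i, v i ^ 2) with hadef
  set b := Real.sqrt (∑ j, w j ^ 2) with hbdef
  have hapos : 0 < a := Real.sqrt_pos.mpr (sumsq_pos hz1)
  have hbpos : 0 < b := Real.sqrt_pos.mpr (sumsq_pos hz2)
  have hdiv1 : (fun i => v i / a) = fun i => a⁻¹ * v i :=
    funext fun i => div_eq_inv_mul (v i) a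
  have hdiv2 : (fun j => w j / b) = fun j => b⁻¹ * w j :=
    funext fun j => div_eq_inv_mul (w j) b
  have hq1 : ∀ A : Fin p → ℝ, qf A (toE (fun i => v i / a)) = a⁻¹ ^ 2 * qf A v := by
    intro A
    rw [qf_toE, hdiv1, qf_smul]
  have hq2 : ∀ B : Fin q → ℝ, qf B (toE (fun j => w j / b)) = b⁻¹ ^ 2 * qf B w := by
    intro B
    rw [qf_toE, hdiv2, qf_smul]
  have hH : 0 < qf ε w := qf_pos hε hz2
  -- value of the scaling factors
  have hinner1 : c * qf ε (toE (fun j => w j / b)) /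
      (qf α (toE (fun i => v i / a)) * qf ε (toE (fun j => w j / b)) +
       qf β (toE (fun j => w j / b)) * qf δ (toE (fun i => v i / a))) = a ^ 2 := by
    rw [hq1, hq1, hq2, hq2, h2]
    have hden : a⁻¹ ^ 2 * qf α v * (b⁻¹ ^ 2 * qf ε w) + b⁻¹ ^ 2 * qf β w * (a⁻¹ ^ 2 * qf ε w)
        = a⁻¹ ^ 2 * b⁻¹ ^ 2 * qf ε w * c := by
      rw [← h1]; ring
    rw [hden, div_eq_iff (mul_pos (mul_pos (mul_pos (pow_pos (inv_pos.mpr hapos) 2)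
      (pow_pos (inv_pos.mpr hbpos) 2)) hH) hc).ne']
    field_simp
  have hinner2 : c * qf δ (toE (fun i => v i / a)) /
      (qf α (toE (fun i => v i / a)) * qf ε (toE (fun j => w j / b)) +
       qf β (toE (fun j => w j / b)) * qf δ (toE (fun i => v i / a))) = b ^ 2 := by
    rw [hq1, hq1, hq2, hq2, h2]
    have hden : a⁻¹ ^ 2 * qf α v * (b⁻¹ ^ 2 * qf ε w) + b⁻¹ ^ 2 * qf β w * (a⁻¹ ^ 2 * qf ε w)
        = a⁻¹ ^ 2 * b⁻¹ ^ 2 * qf ε w * c := by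
      rw [← h1]; ring
    rw [hden, div_eq_iff (mul_pos (mul_pos (mul_pos (pow_pos (inv_pos.mpr hapos) 2)
      (pow_pos (inv_pos.mpr hbpos) 2)) hH) hc).ne']
    field_simp
  unfold fwd bwd
  simp only
  refine Prod.ext ?_ ?_
  · funext i
    simp only [← hadef, ← hbdef, hinner1, Real.sqrt_sq hapos.le, toE_apply]
    field_simp
  · funext j
    simp only [← hadef, ← hbdef, hinner2, Real.sqrt_sq hbpos.le, toE_apply]
    field_simp

lemma sumsq_of_mem_sphere {n : ℕ} (x : ↥(Metric.sphere (0 : EuclideanSpace ℝ (Fin n)) 1)) :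
    ∑ i, ((x : EuclideanSpace ℝ (Fin n)) i) ^ 2 = 1 := by
  have h := mem_sphere_zero_iff_norm.mp x.2
  rw [EuclideanSpace.norm_eq] at h
  have h2 := Real.sqrt_eq_one.mp h
  simpa [Real.norm_eq_abs, sq_abs] using h2

lemma fwd_continuous (hc : 0 < c) (hα : ∀ i, 0 < α i) (hδ : ∀ i, 0 < δ i)
    (hβ : ∀ j, 0 < β j) (hε : ∀ j, 0 < ε j) :
    Continuous (fun z : ↥(Metric.sphere (0 : EuclideanSpace ℝ (Fin p)) 1) ×
        ↥(Metric.sphere (0 : EuclideanSpace ℝ (Fin q)) 1) =>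
      fwd α δ β ε c (z.1 : EuclideanSpace ℝ (Fin p)) (z.2 : EuclideanSpace ℝ (Fin q))) := by
  have hx : Continuous fun z : ↥(Metric.sphere (0 : EuclideanSpace ℝ (Fin p)) 1) ×
      ↥(Metric.sphere (0 : EuclideanSpace ℝ (Fin q)) 1) =>
      (z.1 : EuclideanSpace ℝ (Fin p)) := continuous_subtype_val.comp continuous_fst
  have hy : Continuous fun z : ↥(Metric.sphere (0 : EuclideanSpace ℝ (Fin p)) 1) ×
      ↥(Metric.sphere (0 : EuclideanSpace ℝ (Fin q)) 1) =>
      (z.2 : EuclideanSpace ℝ (Fin q)) := continuous_subtype_val.comp continuous_snd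
  have hxi : ∀ i : Fin p, Continuous fun z : ↥(Metric.sphere (0 : EuclideanSpace ℝ (Fin p)) 1) ×
      ↥(Metric.sphere (0 : EuclideanSpace ℝ (Fin q)) 1) =>
      (z.1 : EuclideanSpace ℝ (Fin p)) i :=
    fun i => (EuclideanSpace.proj (𝕜 := ℝ) i).continuous.comp hx
  have hyj : ∀ j : Fin q, Continuous fun z : ↥(Metric.sphere (0 : EuclideanSpace ℝ (Fin p)) 1) ×
      ↥(Metric.sphere (0 : EuclideanSpace ℝ (Fin q)) 1) =>
      (z.2 : EuclideanSpace ℝ (Fin q)) j :=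
    fun j => (EuclideanSpace.proj (𝕜 := ℝ) j).continuous.comp hy
  have hqα : Continuous fun z : ↥(Metric.sphere (0 : EuclideanSpace ℝ (Fin p)) 1) ×
      ↥(Metric.sphere (0 : EuclideanSpace ℝ (Fin q)) 1) =>
      qf α (z.1 : EuclideanSpace ℝ (Fin p)) := by
    unfold qf
    exact continuous_finset_sum _ fun i _ => continuous_const.mul ((hxi i).pow 2)
  have hqδ : Continuous fun z : ↥(Metric.sphere (0 : EuclideanSpace ℝ (Fin p)) 1) ×
      ↥(Metric.sphere (0 : EuclideanSpace ℝ (Fin q)) 1) =>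
      qf δ (z.1 : EuclideanSpace ℝ (Fin p)) := by
    unfold qf
    exact continuous_finset_sum _ fun i _ => continuous_const.mul ((hxi i).pow 2)
  have hqβ : Continuous fun z : ↥(Metric.sphere (0 : EuclideanSpace ℝ (Fin p)) 1) ×
      ↥(Metric.sphere (0 : EuclideanSpace ℝ (Fin q)) 1) =>
      qf β (z.2 : EuclideanSpace ℝ (Fin q)) := by
    unfold qf
    exact continuous_finset_sum _ fun j _ => continuous_const.mul ((hyj j).pow 2)
  have hqε : Continuous fun z : ↥(Metric.sphere (0 : EuclideanSpace ℝ (Fin p)) 1) ×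
      ↥(Metric.sphere (0 : EuclideanSpace ℝ (Fin q)) 1) =>
      qf ε (z.2 : EuclideanSpace ℝ (Fin q)) := by
    unfold qf
    exact continuous_finset_sum _ fun j _ => continuous_const.mul ((hyj j).pow 2)
  have hDpos : ∀ z : ↥(Metric.sphere (0 : EuclideanSpace ℝ (Fin p)) 1) ×
      ↥(Metric.sphere (0 : EuclideanSpace ℝ (Fin q)) 1),
      0 < qf α (z.1 : EuclideanSpace ℝ (Fin p)) * qf ε (z.2 : EuclideanSpace ℝ (Fin q)) +
        qf β (z.2 : EuclideanSpace ℝ (Fin q)) * qf δ (z.1 : EuclideanSpace ℝ (Fin p)) := by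
    intro z
    have hx0 : ((z.1 : EuclideanSpace ℝ (Fin p)) : Fin p → ℝ) ≠ 0 :=
      fun h => ne_zero_of_mem_unit_sphere z.1 (by ext i; exact congrFun h i)
    have hy0 : ((z.2 : EuclideanSpace ℝ (Fin q)) : Fin q → ℝ) ≠ 0 :=
      fun h => ne_zero_of_mem_unit_sphere z.2 (by ext i; exact congrFun h i)
    exact add_pos (mul_pos (qf_pos hα hx0) (qf_pos hε hy0))
      (mul_pos (qf_pos hβ hy0) (qf_pos hδ hx0))
  have hD : Continuous fun z : ↥(Metric.sphere (0 : EuclideanSpace ℝ (Fin p)) 1) ×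
      ↥(Metric.sphere (0 : EuclideanSpace ℝ (Fin q)) 1) =>
      qf α (z.1 : EuclideanSpace ℝ (Fin p)) * qf ε (z.2 : EuclideanSpace ℝ (Fin q)) +
        qf β (z.2 : EuclideanSpace ℝ (Fin q)) * qf δ (z.1 : EuclideanSpace ℝ (Fin p)) :=
    (hqα.mul hqε).add (hqβ.mul hqδ)
  have hs : Continuous fun z : ↥(Metric.sphere (0 : EuclideanSpace ℝ (Fin p)) 1) ×
      ↥(Metric.sphere (0 : EuclideanSpace ℝ (Fin q)) 1) =>
      Real.sqrt (c * qf ε (z.2 : EuclideanSpace ℝ (Fin q)) /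
        (qf α (z.1 : EuclideanSpace ℝ (Fin p)) * qf ε (z.2 : EuclideanSpace ℝ (Fin q)) +
         qf β (z.2 : EuclideanSpace ℝ (Fin q)) * qf δ (z.1 : EuclideanSpace ℝ (Fin p)))) :=
    Real.continuous_sqrt.comp
      (((continuous_const.mul hqε).div hD) fun z => (hDpos z).ne')
  have ht : Continuous fun z : ↥(Metric.sphere (0 : EuclideanSpace ℝ (Fin p)) 1) ×
      ↥(Metric.sphere (0 : EuclideanSpace ℝ (Fin q)) 1) =>
      Real.sqrt (c * qf δ (z.1 : EuclideanSpace ℝ (Fin p)) /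
        (qf α (z.1 : EuclideanSpace ℝ (Fin p)) * qf ε (z.2 : EuclideanSpace ℝ (Fin q)) +
         qf β (z.2 : EuclideanSpace ℝ (Fin q)) * qf δ (z.1 : EuclideanSpace ℝ (Fin p)))) :=
    Real.continuous_sqrt.comp
      (((continuous_const.mul hqδ).div hD) fun z => (hDpos z).ne')
  unfold fwd
  exact Continuous.prodMk
    (continuous_pi fun i => hs.mul (hxi i))
    (continuous_pi fun j => ht.mul (hyj j))

theorem prodQuadricHomeo (hc : 0 < c)
    (hα : ∀ i, 0 < α i) (hδ : ∀ i, 0 < δ i) (hβ : ∀ j, 0 < β j) (hε : ∀ j, 0 < ε j) :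
    Nonempty ({z : (Fin p → ℝ) × (Fin q → ℝ) //
        qf α z.1 + qf β z.2 = c ∧ qf δ z.1 = qf ε z.2} ≃ₜ
      (↥(Metric.sphere (0 : EuclideanSpace ℝ (Fin p)) 1) ×
       ↥(Metric.sphere (0 : EuclideanSpace ℝ (Fin q)) 1))) := by
  classical
  let E : (↥(Metric.sphere (0 : EuclideanSpace ℝ (Fin p)) 1) ×
      ↥(Metric.sphere (0 : EuclideanSpace ℝ (Fin q)) 1)) ≃
      {z : (Fin p → ℝ) × (Fin q → ℝ) //
        qf α z.1 + qf β z.2 = c ∧ qf δ z.1 = qf ε z.2} :=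
  { toFun := fun z => ⟨fwd α δ β ε c (z.1 : EuclideanSpace ℝ (Fin p))
        (z.2 : EuclideanSpace ℝ (Fin q)),
      fwd_mem hc hα hδ hβ hε (ne_zero_of_mem_unit_sphere z.1)
        (ne_zero_of_mem_unit_sphere z.2)⟩
    invFun := fun u =>
      (⟨(bwd (u : (Fin p → ℝ) × (Fin q → ℝ))).1,
        mem_sphere_zero_iff_norm.mpr
          (norm_normalize (mem_ne_zero hc hα hδ hβ hε u.2.1 u.2.2).1)⟩,
       ⟨(bwd (u : (Fin p → ℝ) × (Fin q → ℝ))).2,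
        mem_sphere_zero_iff_norm.mpr
          (norm_normalize (mem_ne_zero hc hα hδ hβ hε u.2.1 u.2.2).2)⟩)
    left_inv := by
      intro z
      have h := bwd_fwd (α := α) (δ := δ) (β := β) (ε := ε) hc hα hδ hβ hε
        (sumsq_of_mem_sphere z.1) (sumsq_of_mem_sphere z.2)
      refine Prod.ext (Subtype.ext ?_) (Subtype.ext ?_)
      · exact congrArg Prod.fst h
      · exact congrArg Prod.snd h
    right_inv := by
      intro u
      exact Subtype.ext (fwd_bwd hc hα hδ hβ hε u.2.1 u.2.2) }
  have hcont : Continuous E :=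
    Continuous.subtype_mk (fwd_continuous hc hα hδ hβ hε) _
  exact ⟨(Continuous.homeoOfEquivCompactToT2 (f := E) hcont).symm⟩

end QuadricMain

/-- The intersection of two real quadrics
`R(p,q) = {u ∈ ℝᵐ : Σₖ γ₁ₖuₖ² = c, Σₖ γ₂ₖuₖ² = 0}` with `c > 0`, all `γ₁ₖ > 0`,
`γ₂ₖ > 0` for `k < p` and `γ₂ₖ < 0` for `k ≥ p` (`0 < p < m`, `q = m - p`)
is homeomorphic to `S^{p-1} × S^{q-1}`. -/
theorem stmt18 (m p q : ℕ) (hp : 0 < p) (hpm : p < m) (hq : q = m - p)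
    (γ₁ γ₂ : Fin m → ℝ) (c : ℝ) (hc : 0 < c)
    (h1 : ∀ k, 0 < γ₁ k)
    (h2p : ∀ k : Fin m, (k : ℕ) < p → 0 < γ₂ k)
    (h2q : ∀ k : Fin m, p ≤ (k : ℕ) → γ₂ k < 0) :
    Nonempty ({u : Fin m → ℝ // ∑ k, γ₁ k * u k ^ 2 = c ∧ ∑ k, γ₂ k * u k ^ 2 = 0}
      ≃ₜ (↥(Metric.sphere (0 : EuclideanSpace ℝ (Fin p)) 1) ×
          ↥(Metric.sphere (0 : EuclideanSpace ℝ (Fin q)) 1))) := by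
  classical
  have hpq : p + q = m := by omega
  set e : Fin p ⊕ Fin q ≃ Fin m := finSumFinEquiv.trans (finCongr hpq) with he
  set Φ : (Fin m → ℝ) ≃ₜ ((Fin p → ℝ) × (Fin q → ℝ)) :=
    (Homeomorph.piCongrLeft (Y := fun _ : Fin m => ℝ) e).symm.trans
      Homeomorph.sumArrowHomeomorphProdArrow with hΦdef
  have hΦ1 : ∀ (u : Fin m → ℝ) (i : Fin p), (Φ u).1 i = u (e (Sum.inl i)) := by
    intro u i
    rfl
  have hΦ2 : ∀ (u : Fin m → ℝ) (j : Fin q), (Φ u).2 j = u (e (Sum.inr j)) := by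
    intro u j
    rfl
  have hsplit : ∀ f : Fin m → ℝ,
      ∑ k, f k = ∑ i, f (e (Sum.inl i)) + ∑ j, f (e (Sum.inr j)) := by
    intro f
    rw [← Equiv.sum_comp e f, Fintype.sum_sum_type]
  have hlt : ∀ i : Fin p, ((e (Sum.inl i)) : ℕ) < p := by
    intro i
    simp [he, finSumFinEquiv]
  have hge : ∀ j : Fin q, p ≤ ((e (Sum.inr j)) : ℕ) := by
    intro j
    simp [he, finSumFinEquiv]
  set α : Fin p → ℝ := fun i => γ₁ (e (Sum.inl i)) with hα
  set δ : Fin p → ℝ := fun i => γ₂ (e (Sum.inl i)) with hδ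
  set β : Fin q → ℝ := fun j => γ₁ (e (Sum.inr j)) with hβ
  set ε : Fin q → ℝ := fun j => -γ₂ (e (Sum.inr j)) with hε
  obtain ⟨H⟩ := prodQuadricHomeo (α := α) (δ := δ) (β := β) (ε := ε) hc
    (fun i => h1 _) (fun i => h2p _ (hlt i)) (fun j => h1 _)
    (fun j => neg_pos.mpr (h2q _ (hge j)))
  refine ⟨(Φ.subtype ?_).trans H⟩
  intro u
  have e1 : qf α (Φ u).1 + qf β (Φ u).2 = ∑ k, γ₁ k * u k ^ 2 := by
    rw [hsplit (fun k => γ₁ k * u k ^ 2)]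
    unfold qf
    have t1 : ∑ i, α i * (Φ u).1 i ^ 2
        = ∑ i : Fin p, γ₁ (e (Sum.inl i)) * u (e (Sum.inl i)) ^ 2 :=
      Finset.sum_congr rfl fun i _ => by rw [hΦ1]
    have t2 : ∑ j, β j * (Φ u).2 j ^ 2
        = ∑ j : Fin q, γ₁ (e (Sum.inr j)) * u (e (Sum.inr j)) ^ 2 :=
      Finset.sum_congr rfl fun j _ => by rw [hΦ2]
    rw [t1, t2]
  have e2 : qf δ (Φ u).1 - qf ε (Φ u).2 = ∑ k, γ₂ k * u k ^ 2 := by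
    rw [hsplit (fun k => γ₂ k * u k ^ 2)]
    unfold qf
    have t1 : ∑ i, δ i * (Φ u).1 i ^ 2
        = ∑ i : Fin p, γ₂ (e (Sum.inl i)) * u (e (Sum.inl i)) ^ 2 :=
      Finset.sum_congr rfl fun i _ => by rw [hΦ1]
    have t2 : ∑ j, ε j * (Φ u).2 j ^ 2
        = ∑ j : Fin q, -(γ₂ (e (Sum.inr j)) * u (e (Sum.inr j)) ^ 2) :=
      Finset.sum_congr rfl fun j _ => by rw [hΦ2]; show -γ₂ (e (Sum.inr j)) * _ = _; ring
    rw [t1, t2, Finset.sum_neg_distrib, sub_neg_eq_add]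
  constructor
  · rintro ⟨g1, g2⟩
    exact ⟨e1.trans g1, sub_eq_zero.mp (e2.trans g2)⟩
  · rintro ⟨g1, g2⟩
    refine ⟨e1.symm.trans g1, ?_⟩
    rw [← e2]
    exact sub_eq_zero.mpr g2
end

section
/- Let N ⊆ ℂᵐ be the image of the map j : R × T_Γ → ℂᵐ, (u,φ) ↦ (u₁e^{2πi⟨γ₁,φ⟩},…,uₘe^{2πi⟨γₘ,φ⟩}), where R = {u ∈ ℝᵐ : Σₖ γₖuₖ² = δ}. Then N is contained in Z = {z ∈ ℂᵐ : Σₖ γₖ|zₖ|² = δ}, and at every point of the form j(u,φ) with all uₖ ≠ 0, the image under j of the tangent space is an isotropic subspace for the standard symplectic form ω = 2Σₖ dxₖ∧dyₖ on ℂᵐ (i.e., j is a Lagrangian immersion at such points). -/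
lemma conj_exp_mul (a r : ℝ) :
    (starRingEnd ℂ) (Complex.exp ((a : ℂ) * Complex.I * (r : ℂ))) *
      Complex.exp ((a : ℂ) * Complex.I * (r : ℂ)) = 1 := by
  rw [← Complex.exp_conj, ← Complex.exp_add]
  simp [← Complex.exp_add, Complex.exp_eq_one_iff]

lemma term_im (a r u v s v' s' : ℝ) :
    ((starRingEnd ℂ) (((v:ℂ) + (a:ℂ)*Complex.I*(s:ℂ)*(u:ℂ)) *
        Complex.exp ((a:ℂ)*Complex.I*(r:ℂ))) *
      (((v':ℂ) + (a:ℂ)*Complex.I*(s':ℂ)*(u:ℂ)) *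
        Complex.exp ((a:ℂ)*Complex.I*(r:ℂ)))).im
    = a * (v * (s' * u)) - a * (s * u * v') := by
  have h := conj_exp_mul a r
  have e : (starRingEnd ℂ) (((v:ℂ) + (a:ℂ)*Complex.I*(s:ℂ)*(u:ℂ)) *
        Complex.exp ((a:ℂ)*Complex.I*(r:ℂ))) *
      (((v':ℂ) + (a:ℂ)*Complex.I*(s':ℂ)*(u:ℂ)) *
        Complex.exp ((a:ℂ)*Complex.I*(r:ℂ)))
      = ((starRingEnd ℂ) ((v:ℂ) + (a:ℂ)*Complex.I*(s:ℂ)*(u:ℂ))) *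
          ((v':ℂ) + (a:ℂ)*Complex.I*(s':ℂ)*(u:ℂ)) *
          ((starRingEnd ℂ) (Complex.exp ((a:ℂ)*Complex.I*(r:ℂ))) *
            Complex.exp ((a:ℂ)*Complex.I*(r:ℂ))) := by
    rw [map_mul]; ring
  rw [e, h, mul_one]
  simp [Complex.add_im, Complex.mul_im, Complex.add_re, Complex.mul_re]
  ring

lemma key_sum {m d : ℕ} (γ : Fin m → (Fin d → ℝ)) (c : Fin m → ℝ) (χ : Fin d → ℝ)
    (h : ∑ k, (c k) • γ k = 0) :
    ∑ k, c k * (∑ i, γ k i * χ i) = 0 := by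
  have e : ∀ i, ∑ k, c k * γ k i = 0 := by
    intro i
    have := congrFun h i
    simpa [Finset.sum_apply] using this
  calc ∑ k, c k * (∑ i, γ k i * χ i) = ∑ k, ∑ i, (c k * γ k i) * χ i := by
        simp [Finset.mul_sum, mul_assoc]
    _ = ∑ i, (∑ k, c k * γ k i) * χ i := by
        rw [Finset.sum_comm]; simp [Finset.sum_mul]
    _ = 0 := by simp [e]

/-- The map `j : R × T_Γ → ℂᵐ`, `(u,φ) ↦ (uₖ e^{2πi⟨γₖ,φ⟩})ₖ`, where
`R = {u ∈ ℝᵐ : Σₖ uₖ² γₖ = δ}`.  Its image is contained in the intersection of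
Hermitian quadrics `Z = {z : Σₖ |zₖ|² γₖ = δ}`, and at every point `j(u,φ)` with
all `uₖ ≠ 0` the image of the differential of `j` (spanned by the vectors
`Dj(v,ψ)ₖ = (vₖ + 2πi⟨γₖ,ψ⟩uₖ)e^{2πi⟨γₖ,φ⟩}` for `(v,ψ)` tangent to `R × T_Γ`)
is isotropic for the standard symplectic form `ω(ξ,η) = 2·Im⟨ξ,η⟩_ℂ` on `ℂᵐ`:
`j` is a Lagrangian immersion at such points. -/
theorem stmt19 (m d : ℕ) (γ : Fin m → (Fin d → ℝ)) (δ : Fin d → ℝ)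
    (jmap : (Fin m → ℝ) → (Fin d → ℝ) → (Fin m → ℂ))
    (hj : ∀ u φ k, jmap u φ k = ((u k : ℝ) : ℂ) *
      Complex.exp (((2 * Real.pi : ℝ) : ℂ) * Complex.I * ((∑ i, γ k i * φ i : ℝ) : ℂ))) :
    (∀ (u : Fin m → ℝ) (φ : Fin d → ℝ),
      ∑ k, (u k ^ 2) • γ k = δ → ∑ k, (‖jmap u φ k‖ ^ 2) • γ k = δ) ∧
    (∀ (u : Fin m → ℝ) (φ : Fin d → ℝ), (∀ k, u k ≠ 0) →
      ∑ k, (u k ^ 2) • γ k = δ →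
      ∀ (v v' : Fin m → ℝ) (ψ ψ' : Fin d → ℝ),
        ∑ k, (u k * v k) • γ k = 0 → ∑ k, (u k * v' k) • γ k = 0 →
        (2 : ℝ) * (∑ k,
          (starRingEnd ℂ) ((((v k : ℝ) : ℂ) +
              ((2 * Real.pi : ℝ) : ℂ) * Complex.I * ((∑ i, γ k i * ψ i : ℝ) : ℂ) * ((u k : ℝ) : ℂ)) *
            Complex.exp (((2 * Real.pi : ℝ) : ℂ) * Complex.I * ((∑ i, γ k i * φ i : ℝ) : ℂ))) *
          ((((v' k : ℝ) : ℂ) +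
              ((2 * Real.pi : ℝ) : ℂ) * Complex.I * ((∑ i, γ k i * ψ' i : ℝ) : ℂ) * ((u k : ℝ) : ℂ)) *
            Complex.exp (((2 * Real.pi : ℝ) : ℂ) * Complex.I * ((∑ i, γ k i * φ i : ℝ) : ℂ)))).im
          = 0) := by
  constructor
  · intro u φ h
    have : ∀ k, ‖jmap u φ k‖ ^ 2 = u k ^ 2 := by
      intro k
      rw [hj]
      simp [Complex.norm_exp, sq_abs]
    simp only [this]; exact h
  · intro u φ _ _ v v' ψ ψ' h1 h2
    have A := key_sum γ (fun k => u k * v k) ψ' h1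
    have B := key_sum γ (fun k => u k * v' k) ψ h2
    rw [Complex.im_sum]
    simp only [term_im]
    have e : ∑ k, ((2 * Real.pi) * (v k * ((∑ i, γ k i * ψ' i) * u k))
          - (2 * Real.pi) * ((∑ i, γ k i * ψ i) * u k * v' k))
        = (2 * Real.pi) * (∑ k, (u k * v k) * (∑ i, γ k i * ψ' i))
          - (2 * Real.pi) * (∑ k, (u k * v' k) * (∑ i, γ k i * ψ i)) := by
      rw [Finset.mul_sum, Finset.mul_sum, ← Finset.sum_sub_distrib]
      exact Finset.sum_congr rfl fun k _ => by ring
    rw [e, A, B]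
    ring
end
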